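/- Let p be an offspring distribution on ℕ with probability generating function f(s) = ∑_{k=0}^∞ p(k)·s^k, let q := inf { s ∈ [0,1] : f(s) = s } be the extinction probability, and assume q > 0 and f(q) = q. Then the only s ∈ [0,1] with f(q·s) = q·s is s = 1. Consequently the generating function f̃(s) := f(q·s)/q of the conditioned offspring law has 1 as its unique (hence least) fixed point in [0,1]: the process conditioned on extinction has extinction probability one. -/
import Mathlib


open scoped NNReal ENNReal

/-- If the extinction probability `q = inf { s ∈ [0,1] : f(s) = s }` is
positive and is a fixed point of `f`, then the only `s ∈ [0,1]` with
`f(qs) = qs` is `s = 1`; hence the generating function `f̃(s) = f(qs)/q` of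
the conditioned offspring law has `1` as its unique (hence least) fixed point
in `[0,1]`: the conditioned process has extinction probability one. -/
theorem conditioned_process_dies_out
    (p : ℕ → ℝ≥0) (hp : ∑' k, (p k : ℝ) = 1)
    (f : ℝ → ℝ) (hf : ∀ s, f s = ∑' k, (p k : ℝ) * s ^ k)
    (q : ℝ) (hq : q = sInf {s | s ∈ Set.Icc (0 : ℝ) 1 ∧ f s = s})
    (hq0 : 0 < q) (hfix : f q = q) :
    (∀ s ∈ Set.Icc (0 : ℝ) 1, f (q * s) = q * s → s = 1) ∧
    (∀ s ∈ Set.Icc (0 : ℝ) 1, (f (q * s) / q = s ↔ s = 1)) := by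
  have hbdd : BddBelow {s | s ∈ Set.Icc (0 : ℝ) 1 ∧ f s = s} :=
    ⟨0, fun x hx => hx.1.1⟩
  have hf1 : f 1 = 1 := by simp [hf, hp]
  have h1mem : (1 : ℝ) ∈ {s | s ∈ Set.Icc (0 : ℝ) 1 ∧ f s = s} :=
    ⟨⟨zero_le_one, le_refl 1⟩, hf1⟩
  have hq1 : q ≤ 1 := hq ▸ csInf_le hbdd h1mem
  have key : ∀ s ∈ Set.Icc (0 : ℝ) 1, f (q * s) = q * s → s = 1 := by
    intro s hs hfs
    have hmem : q * s ∈ {s | s ∈ Set.Icc (0 : ℝ) 1 ∧ f s = s} := by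
      refine ⟨⟨mul_nonneg hq0.le hs.1, ?_⟩, hfs⟩
      calc q * s ≤ 1 * 1 := mul_le_mul hq1 hs.2 hs.1 zero_le_one
        _ = 1 := mul_one 1
    have hle := csInf_le hbdd hmem
    rw [← hq] at hle
    have : 1 ≤ s := by
      by_contra h
      push_neg at h
      have := mul_lt_mul_of_pos_left h hq0
      rw [mul_one] at this
      exact absurd hle (not_le.mpr this)
    exact le_antisymm hs.2 this
  refine ⟨key, fun s hs => ⟨fun h => ?_, fun h => ?_⟩⟩
  · apply key s hs
    field_simp at h
    linarith [h]
  · subst h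
    rw [mul_one, hfix, div_self hq0.ne']
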